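/- arXiv:2109.13627 — 2 statements merged into one kernel-verified Lean document; each statement's English description precedes it below -/
import Mathlib

section
/- For every k ≥ 3, there exists a signed graph (G,σ) with ψ(G,σ) = k containing a vertex v such that ψ(G−v,σ) = k − 2, where (G−v,σ) is the signed graph obtained by deleting v and restricting σ. (That is, the lower bound ψ(G,σ) − 2 ≤ ψ(G−v,σ) is attained for every k ≥ 3.) -/
open SimpleGraph

/-- A signature on a graph: a symmetric assignment of signs (`1` or `-1`) to pairs of
vertices (only the values on edges are relevant). -/
def IsSignature {V : Type*} (σ : V → V → ℤ) : Prop :=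
  (∀ u v, σ u v = σ v u) ∧ (∀ u v, σ u v = 1 ∨ σ u v = -1)

/-- `σ'` is obtained from `σ` by switching a set of vertices: every vertex gets a
switching value `±1`, and the sign of an edge is multiplied by the values at its ends. -/
def SwitchEquiv {V : Type*} (σ σ' : V → V → ℤ) : Prop :=
  ∃ s : V → ℤ, (∀ v, s v = 1 ∨ s v = -1) ∧ ∀ u v, σ' u v = s u * s v * σ u v

/-- The colour set `M_k`, as a set of integers: `{±1, …, ±n}` if `k = 2n`, and
`{-n, …, -1, 0, 1, …, n}` if `k = 2n+1` (colour `±0` is represented by `0`). -/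
def colourSet (k : ℕ) : Set ℤ :=
  if Even k then {i | i ≠ 0 ∧ i.natAbs ≤ k / 2} else {i | i.natAbs ≤ k / 2}

/-- A proper `k`-colouring of the signed graph `(G, σ)`: colours come from `M_k` and,
for each edge `uv`, `φ u ≠ σ(uv) · φ v`. -/
def IsProperColouring {V : Type*} (G : SimpleGraph V) (σ : V → V → ℤ) (k : ℕ)
    (φ : V → ℤ) : Prop :=
  (∀ v, φ v ∈ colourSet k) ∧ ∀ u v, G.Adj u v → φ u ≠ σ u v * φ v

/-- The sign of an integer for the purpose of switching: `-1` for negative colours,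
`1` otherwise. -/
def isgn (x : ℤ) : ℤ := if x < 0 then -1 else 1

/-- The sign of the edge `uv` after switching every vertex whose colour is negative. -/
def redSign {V : Type*} (σ : V → V → ℤ) (φ : V → ℤ) (u v : V) : ℤ :=
  isgn (φ u) * isgn (φ v) * σ u v

/-- After switching all negatively-coloured vertices and taking absolute values of
colours, there is an edge of `(G, σ)` whose ends get values `i` and `j` and whose
resulting sign is `s`. -/
def HasEdgeType {V : Type*} (G : SimpleGraph V) (σ : V → V → ℤ) (φ : V → ℤ)
    (i j : ℕ) (s : ℤ) : Prop :=
  ∃ u v, G.Adj u v ∧ (φ u).natAbs = i ∧ (φ v).natAbs = j ∧ redSign σ φ u v = s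

/-- A complete `k`-colouring of the signed graph `(G, σ)`. -/
def IsCompleteColouring {V : Type*} (G : SimpleGraph V) (σ : V → V → ℤ) (k : ℕ)
    (φ : V → ℤ) : Prop :=
  IsProperColouring G σ k φ ∧
  (∀ i j : ℕ, (i : ℤ) ∈ colourSet k → (j : ℤ) ∈ colourSet k → i ≠ j →
    HasEdgeType G σ φ i j 1 ∧ HasEdgeType G σ φ i j (-1)) ∧
  (∀ i : ℕ, 1 ≤ i → (i : ℤ) ∈ colourSet k → HasEdgeType G σ φ i i (-1))

/-- Some signed graph equivalent to `(G, σ)` admits a complete `k`-colouring. -/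
def AdmitsComplete {V : Type*} (G : SimpleGraph V) (σ : V → V → ℤ) (k : ℕ) : Prop :=
  ∃ σ', IsSignature σ' ∧ SwitchEquiv σ σ' ∧ ∃ φ, IsCompleteColouring G σ' k φ

/-- The achromatic number of the signed graph `(G, σ)`: the largest `k` such that some
signed graph equivalent to `(G, σ)` admits a complete `k`-colouring. -/
noncomputable def psi {V : Type*} (G : SimpleGraph V) (σ : V → V → ℤ) : ℕ :=
  sSup {k | AdmitsComplete G σ k}

/-- The chromatic number of the signed graph `(G, σ)`: the smallest `k` such that
`(G, σ)` admits a proper `k`-colouring. -/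
noncomputable def chi {V : Type*} (G : SimpleGraph V) (σ : V → V → ℤ) : ℕ :=
  sInf {k | ∃ φ, IsProperColouring G σ k φ}

/-! ### auxiliary -/

def valsF (k : ℕ) : Finset ℕ := if Even k then Finset.Icc 1 (k/2) else Finset.Icc 0 (k/2)

def DF (k : ℕ) : Finset (ℕ × ℕ) := (valsF k ×ˢ valsF k).erase (0,0)

lemma mem_valsF {k i : ℕ} : i ∈ valsF k ↔ (i : ℤ) ∈ colourSet k := by
  unfold valsF colourSet
  by_cases h : Even k <;>
    simp [h, Finset.mem_Icc, Set.mem_setOf_eq, Int.natAbs_natCast] <;> omega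

lemma card_valsF (k : ℕ) : (valsF k).card = (k+1)/2 := by
  unfold valsF
  split_ifs with h
  · rw [Nat.card_Icc]; have := Nat.even_iff.1 h; omega
  · rw [Nat.card_Icc]; have := Nat.odd_iff.1 (Nat.not_even_iff_odd.1 h); omega

lemma card_DF (k : ℕ) : (DF k).card = ((k+1)/2) * ((k+1)/2) - k % 2 := by
  unfold DF
  by_cases h : Even k
  · rw [Finset.erase_eq_of_notMem]
    · simp only [Finset.card_product, card_valsF]
      have := Nat.even_iff.1 h; omega
    · simp [valsF, h, Finset.mem_Icc]
  · rw [Finset.card_erase_of_mem]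
    · simp only [Finset.card_product, card_valsF]
      have := Nat.odd_iff.1 (Nat.not_even_iff_odd.1 h); omega
    · simp [valsF, h, Finset.mem_Icc]

lemma DF_mono {j k : ℕ} (hj : 1 ≤ j) (hjk : j < k) : (DF j).card < (DF k).card := by
  rw [card_DF, card_DF]
  set a := (j+1)/2 with ha
  set b := (k+1)/2 with hb
  have ha1 : 1 ≤ a := by omega
  have hab : a ≤ b := by omega
  rcases eq_or_lt_of_le hab with h | h
  · have : j % 2 = 1 ∧ k % 2 = 0 := by omega
    have h2 : 1 ≤ a * a := Nat.one_le_iff_ne_zero.2 (by positivity)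
    rw [h] at h2 ⊢; omega
  · have h1 : (a+1) * (a+1) ≤ b * b := Nat.mul_le_mul (by omega) (by omega)
    have h2 : (a+1) * (a+1) = a*a + 2*a + 1 := by ring
    omega

lemma psi_eq {V : Type*} (G : SimpleGraph V) (σ : V → V → ℤ) (k : ℕ)
    (h1 : AdmitsComplete G σ k) (h2 : ∀ k', AdmitsComplete G σ k' → k' ≤ k) :
    psi G σ = k :=
  le_antisymm (csSup_le ⟨k, h1⟩ h2) (le_csSup ⟨k, fun _ hx => h2 _ hx⟩ h1)

lemma redSign_symm {V : Type*} {σ : V → V → ℤ} (hσ : ∀ u v, σ u v = σ v u)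
    (φ : V → ℤ) (u v : V) : redSign σ φ u v = redSign σ φ v u := by
  unfold redSign; rw [hσ u v]; ring

lemma hasEdgeType_swap {V : Type*} {G : SimpleGraph V} {σ : V → V → ℤ}
    (hσ : ∀ u v, σ u v = σ v u) {φ : V → ℤ} {i j : ℕ} {s : ℤ}
    (h : HasEdgeType G σ φ i j s) : HasEdgeType G σ φ j i s := by
  obtain ⟨u, v, h1, h2, h3, h4⟩ := h
  exact ⟨v, u, h1.symm, h3, h2, by rw [← redSign_symm hσ]; exact h4⟩

/-- extraction of witnesses for each ordered pair in `DF k` -/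
lemma complete_hasEdgeType {V : Type*} {G : SimpleGraph V} {σ : V → V → ℤ} {k : ℕ}
    {φ : V → ℤ} (hc : IsCompleteColouring G σ k φ) {p : ℕ × ℕ} (hp : p ∈ DF k) :
    HasEdgeType G σ φ p.1 p.2 (if p.1 < p.2 then 1 else -1) := by
  obtain ⟨hne, hmem⟩ := Finset.mem_erase.1 hp
  rw [Finset.mem_product] at hmem
  have h1 : (p.1 : ℤ) ∈ colourSet k := mem_valsF.1 hmem.1
  have h2 : (p.2 : ℤ) ∈ colourSet k := mem_valsF.1 hmem.2
  rcases eq_or_ne p.1 p.2 with he | he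
  · have hp1 : 1 ≤ p.1 := by
      rcases Nat.eq_zero_or_pos p.1 with h0 | h0
      · exact absurd (Prod.ext h0 (he ▸ h0)) hne
      · exact h0
    have := hc.2.2 p.1 hp1 h1
    rw [if_neg (by omega), ← he] at *
    exact this
  · rcases lt_or_gt_of_ne he with hlt | hlt
    · rw [if_pos hlt]; exact (hc.2.1 p.1 p.2 h1 h2 he).1
    · rw [if_neg (by omega)]; exact (hc.2.1 p.1 p.2 h1 h2 he).2

/-- Counting: a complete `k`-colouring requires at least `(DF k).card` edges, where
edges are counted through a decoding function `dec` into the finset `T`. -/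
lemma counting {V : Type*} {G : SimpleGraph V} {σ : V → V → ℤ} {k : ℕ} {φ : V → ℤ}
    (hsym : ∀ u v, σ u v = σ v u)
    (hc : IsCompleteColouring G σ k φ)
    (dec : V → V → ℕ × ℕ) (T : Finset (ℕ × ℕ))
    (hdecT : ∀ u v, G.Adj u v → dec u v ∈ T)
    (hinj : ∀ u v u' v', G.Adj u v → G.Adj u' v' → dec u v = dec u' v' →
      (u' = u ∧ v' = v) ∨ (u' = v ∧ v' = u)) :
    (DF k).card ≤ T.card := by
  rcases isEmpty_or_nonempty V with hV | hV
  · have : DF k = ∅ := by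
      by_contra h
      obtain ⟨p, hp⟩ := Finset.nonempty_of_ne_empty h
      obtain ⟨u, -, -⟩ := complete_hasEdgeType hc hp
      exact hV.elim u
    simp [this]
  · have key : ∀ p : ℕ × ℕ, ∃ u v : V, p ∈ DF k →
        G.Adj u v ∧ (φ u).natAbs = p.1 ∧ (φ v).natAbs = p.2 ∧
        redSign σ φ u v = (if p.1 < p.2 then 1 else -1) := by
      intro p
      by_cases hp : p ∈ DF k
      · obtain ⟨u, v, h⟩ := complete_hasEdgeType hc hp
        exact ⟨u, v, fun _ => h⟩
      · exact ⟨Classical.arbitrary V, Classical.arbitrary V, fun h => absurd h hp⟩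
    choose u v hw using key
    apply Finset.card_le_card_of_injOn (fun p => dec (u p) (v p))
    · intro p hp
      exact hdecT _ _ (hw p hp).1
    · intro p hp q hq hpq
      have hP := hw p hp
      have hQ := hw q hq
      rcases hinj _ _ _ _ hP.1 hQ.1 hpq with ⟨h1, h2⟩ | ⟨h1, h2⟩
      · exact Prod.ext (by rw [← hP.2.1, ← hQ.2.1, h1]) (by rw [← hP.2.2.1, ← hQ.2.2.1, h2])
      · -- swapped case: signs force equality
        have e1 : p.1 = q.2 := by rw [← hP.2.1, ← hQ.2.2.1, h2]
        have e2 : p.2 = q.1 := by rw [← hP.2.2.1, ← hQ.2.1, h1]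
        have hs : (if p.1 < p.2 then (1:ℤ) else -1) = (if q.1 < q.2 then 1 else -1) := by
          rw [← hP.2.2.2, ← hQ.2.2.2, h1, h2]
          exact redSign_symm hsym φ _ _
        by_cases hlt : p.1 < p.2
        · rw [if_pos hlt, if_neg (by omega)] at hs; exact absurd hs (by norm_num)
        · by_cases hlt2 : q.1 < q.2
          · rw [if_neg hlt, if_pos hlt2] at hs; exact absurd hs (by norm_num)
          · exact Prod.ext (by omega) (by omega)

/-! ### transport along an equivalence -/

lemma admits_transport {V W : Type*} (e : W ≃ V) {G : SimpleGraph V} {σ : V → V → ℤ}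
    {H : SimpleGraph W} {τ : W → W → ℤ}
    (hA : ∀ a b, H.Adj a b ↔ G.Adj (e a) (e b))
    (hτ : ∀ a b, τ a b = σ (e a) (e b)) (k : ℕ)
    (h : AdmitsComplete G σ k) : AdmitsComplete H τ k := by
  obtain ⟨σ', ⟨hsymm, hval⟩, ⟨s, hs, hsw⟩, φ, hφ⟩ := h
  refine ⟨fun a b => σ' (e a) (e b), ⟨fun a b => hsymm _ _, fun a b => hval _ _⟩,
    ⟨fun w => s (e w), fun w => hs _, fun a b => by rw [hτ]; exact hsw _ _⟩,
    fun w => φ (e w), ?_⟩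
  obtain ⟨⟨hmem, hprop⟩, h2, h3⟩ := hφ
  have hred : ∀ a b : W, redSign (fun a b => σ' (e a) (e b)) (fun w => φ (e w)) a b
      = redSign σ' φ (e a) (e b) := fun a b => rfl
  refine ⟨⟨fun w => hmem _, fun a b hab => hprop _ _ ((hA a b).1 hab)⟩, ?_, ?_⟩
  · intro i j hi hj hij
    obtain ⟨⟨u, v, huv, e1, e2, e3⟩, ⟨u', v', huv', e1', e2', e3'⟩⟩ := h2 i j hi hj hij
    constructor
    · refine ⟨e.symm u, e.symm v, (hA _ _).2 (by simpa using huv), by simpa using e1,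
        by simpa using e2, ?_⟩
      rw [hred]; simpa using e3
    · refine ⟨e.symm u', e.symm v', (hA _ _).2 (by simpa using huv'), by simpa using e1',
        by simpa using e2', ?_⟩
      rw [hred]; simpa using e3'
  · intro i hi hik
    obtain ⟨u, v, huv, e1, e2, e3⟩ := h3 i hi hik
    refine ⟨e.symm u, e.symm v, (hA _ _).2 (by simpa using huv), by simpa using e1,
      by simpa using e2, ?_⟩
    rw [hred]; simpa using e3

lemma psi_transport {V W : Type*} (e : W ≃ V) {G : SimpleGraph V} {σ : V → V → ℤ}
    {H : SimpleGraph W} {τ : W → W → ℤ}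
    (hA : ∀ a b, H.Adj a b ↔ G.Adj (e a) (e b))
    (hτ : ∀ a b, τ a b = σ (e a) (e b)) :
    psi H τ = psi G σ := by
  have hA' : ∀ a b, G.Adj a b ↔ H.Adj (e.symm a) (e.symm b) := by
    intro a b; rw [hA]; simp
  have hτ' : ∀ a b, σ a b = τ (e.symm a) (e.symm b) := by
    intro a b; rw [hτ]; simp
  unfold psi
  congr 1
  ext k
  exact ⟨admits_transport e.symm hA' hτ' k, admits_transport e hA hτ k⟩

/-! ### structural lemmas about valsF / DF -/

def topP (k : ℕ) (p : ℕ × ℕ) : Prop := p.1 = k/2 ∨ p.2 = k/2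

instance (k : ℕ) (p : ℕ × ℕ) : Decidable (topP k p) := by unfold topP; infer_instance

lemma valsF_le {k i : ℕ} (h : i ∈ valsF k) : i ≤ k/2 := by
  unfold valsF at h; split_ifs at h <;> exact (Finset.mem_Icc.1 h).2

lemma valsF_sub_iff {k : ℕ} (hk : 2 ≤ k) {i : ℕ} :
    i ∈ valsF (k-2) ↔ (i ∈ valsF k ∧ i ≠ k/2) := by
  have hpar : (k-2) % 2 = k % 2 := by omega
  have hdiv : (k-2)/2 = k/2 - 1 := by omega
  unfold valsF
  split_ifs with h1 h2 h2 <;>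
    rw [Nat.even_iff] at * <;> simp [Finset.mem_Icc] <;> omega

lemma DF_entries {k : ℕ} {p : ℕ × ℕ} (hp : p ∈ DF k) :
    p.1 ∈ valsF k ∧ p.2 ∈ valsF k ∧ p ≠ (0,0) := by
  obtain ⟨hne, hmem⟩ := Finset.mem_erase.1 hp
  rw [Finset.mem_product] at hmem
  exact ⟨hmem.1, hmem.2, hne⟩

lemma mem_DF {k : ℕ} {p : ℕ × ℕ} (h1 : p.1 ∈ valsF k) (h2 : p.2 ∈ valsF k)
    (h3 : p ≠ (0,0)) : p ∈ DF k :=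
  Finset.mem_erase.2 ⟨h3, Finset.mem_product.2 ⟨h1, h2⟩⟩

lemma DF_sub {k : ℕ} (hk : 2 ≤ k) : DF (k-2) ⊆ DF k := by
  intro p hp
  obtain ⟨h1, h2, h3⟩ := DF_entries hp
  exact mem_DF ((valsF_sub_iff hk).1 h1).1 ((valsF_sub_iff hk).1 h2).1 h3

lemma DF_low {k : ℕ} (hk : 2 ≤ k) {p : ℕ × ℕ} (hp : p ∈ DF k) (ht : ¬ topP k p) :
    p ∈ DF (k-2) := by
  obtain ⟨h1, h2, h3⟩ := DF_entries hp
  unfold topP at ht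
  push_neg at ht
  exact mem_DF ((valsF_sub_iff hk).2 ⟨h1, ht.1⟩) ((valsF_sub_iff hk).2 ⟨h2, ht.2⟩) h3

lemma DF_not_top {k : ℕ} (hk : 2 ≤ k) {p : ℕ × ℕ} (hp : p ∈ DF (k-2)) : ¬ topP k p := by
  obtain ⟨h1, h2, -⟩ := DF_entries hp
  have e1 := ((valsF_sub_iff hk).1 h1).2
  have e2 := ((valsF_sub_iff hk).1 h2).2
  unfold topP
  push_neg
  exact ⟨e1, e2⟩

lemma top_mem_valsF {k : ℕ} (hk : 3 ≤ k) : k/2 ∈ valsF k := by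
  unfold valsF; split_ifs with h <;> rw [Nat.even_iff] at h <;>
    simp [Finset.mem_Icc] <;> omega

/-! ### the concrete graph G0 -/

abbrev V0 (k : ℕ) := Unit ⊕ ({x // x ∈ DF k} ⊕ {x // x ∈ DF (k-2)})

def adj0 (k : ℕ) : V0 k → V0 k → Prop
  | Sum.inl _, Sum.inr (Sum.inl q) => topP k q.1
  | Sum.inr (Sum.inl q), Sum.inl _ => topP k q.1
  | Sum.inr (Sum.inl q), Sum.inr (Sum.inr l) => q.1 = l.1
  | Sum.inr (Sum.inr l), Sum.inr (Sum.inl q) => q.1 = l.1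
  | _, _ => False

def G0 (k : ℕ) : SimpleGraph (V0 k) where
  Adj := adj0 k
  symm := ⟨by rintro (u | q | l) (u' | q' | l') h <;> first | exact h | exact h.symm⟩
  loopless := ⟨by rintro (u | q | l) h <;> exact h⟩

def sg (p : ℕ × ℕ) : ℤ := if p.1 < p.2 then 1 else -1

def sig0 (k : ℕ) : V0 k → V0 k → ℤ
  | Sum.inl _, Sum.inr (Sum.inl q) => sg q.1
  | Sum.inr (Sum.inl q), Sum.inl _ => sg q.1
  | Sum.inr (Sum.inl q), Sum.inr (Sum.inr _) => sg q.1
  | Sum.inr (Sum.inr _), Sum.inr (Sum.inl q) => sg q.1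
  | _, _ => 1

lemma sig0_symm (k : ℕ) : ∀ u v, sig0 k u v = sig0 k v u := by
  rintro (u | q | l) (u' | q' | l') <;> rfl

lemma sig0_sig (k : ℕ) : IsSignature (sig0 k) := by
  refine ⟨sig0_symm k, ?_⟩
  have hsg : ∀ p : ℕ × ℕ, sg p = 1 ∨ sg p = -1 := by
    intro p; unfold sg; split_ifs <;> simp
  rintro (u | q | l) (u' | q' | l') <;> first | exact Or.inl rfl | exact hsg _

def phi0 (k : ℕ) : V0 k → ℤ
  | Sum.inl _ => ((k/2 : ℕ) : ℤ)
  | Sum.inr (Sum.inl q) => if q.1.1 = k/2 then (q.1.2 : ℤ) else (q.1.1 : ℤ)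
  | Sum.inr (Sum.inr l) => (l.1.2 : ℤ)

lemma isgn_of_nonneg {x : ℤ} (h : 0 ≤ x) : isgn x = 1 := by
  unfold isgn; rw [if_neg (by omega)]

lemma phi0_nonneg (k : ℕ) : ∀ x, 0 ≤ phi0 k x := by
  rintro (u | q | l)
  · exact Int.natCast_nonneg _
  · simp only [phi0]; split_ifs <;> exact Int.natCast_nonneg _
  · exact Int.natCast_nonneg _

lemma redSign_of_nonneg {V : Type*} (σ : V → V → ℤ) {φ : V → ℤ}
    (h : ∀ x, 0 ≤ φ x) (u v : V) : redSign σ φ u v = σ u v := by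
  unfold redSign
  rw [isgn_of_nonneg (h u), isgn_of_nonneg (h v)]
  ring

lemma realize0 {k : ℕ} (hk : 3 ≤ k) {p : ℕ × ℕ} (hp : p ∈ DF k) :
    HasEdgeType (G0 k) (sig0 k) (phi0 k) p.1 p.2 (sg p) := by
  have hred := redSign_of_nonneg (sig0 k) (phi0_nonneg k)
  set q : {x // x ∈ DF k} := ⟨p, hp⟩ with hq
  by_cases h1 : p.1 = k/2
  · refine ⟨Sum.inl (), Sum.inr (Sum.inl q), Or.inl h1, ?_, ?_, ?_⟩
    · simp only [phi0, Int.natAbs_natCast]; omega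
    · simp only [phi0, hq, if_pos h1, Int.natAbs_natCast]
    · rw [hred]; rfl
  · by_cases h2 : p.2 = k/2
    · refine ⟨Sum.inr (Sum.inl q), Sum.inl (), Or.inr h2, ?_, ?_, ?_⟩
      · simp only [phi0, hq, if_neg h1, Int.natAbs_natCast]
      · simp only [phi0, Int.natAbs_natCast]; omega
      · rw [hred]; rfl
    · have hlow : p ∈ DF (k-2) := DF_low (by omega) hp (by unfold topP; push_neg; exact ⟨h1, h2⟩)
      refine ⟨Sum.inr (Sum.inl q), Sum.inr (Sum.inr ⟨p, hlow⟩), rfl, ?_, ?_, ?_⟩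
      · simp only [phi0, hq, if_neg h1, Int.natAbs_natCast]
      · simp only [phi0, Int.natAbs_natCast]
      · rw [hred]; rfl

lemma complete0 {k : ℕ} (hk : 3 ≤ k) :
    IsCompleteColouring (G0 k) (sig0 k) k (phi0 k) := by
  have hred := redSign_of_nonneg (sig0 k) (phi0_nonneg k)
  refine ⟨⟨?_, ?_⟩, ?_, ?_⟩
  · -- colours in colour set
    rintro (u | q | l)
    · exact mem_valsF.1 (top_mem_valsF hk)
    · obtain ⟨e1, e2, -⟩ := DF_entries q.2
      simp only [phi0]
      split_ifs
      · exact mem_valsF.1 e2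
      · exact mem_valsF.1 e1
    · obtain ⟨-, e2, -⟩ := DF_entries l.2
      exact mem_valsF.1 ((valsF_sub_iff (by omega)).1 e2).1
  · -- proper
    have hhalf : 1 ≤ k/2 := by omega
    rintro (u | q | l) (u' | q' | l') h
    · exact h.elim
    · -- centre vs r-vertex
      obtain ⟨e1, e2, e3⟩ := DF_entries q'.2
      have b1 := valsF_le e1
      have b2 := valsF_le e2
      show ((k/2 : ℕ) : ℤ) ≠ sig0 k _ _ * phi0 k (Sum.inr (Sum.inl q'))
      show ((k/2 : ℕ) : ℤ) ≠ sg q'.1 * (if q'.1.1 = k/2 then (q'.1.2 : ℤ) else (q'.1.1 : ℤ))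
      unfold sg
      rcases h with ht | ht
      · rw [if_pos ht, if_neg (by omega)]
        have : ¬ ((0:ℕ) = 0) → True := fun _ => trivial
        push_cast
        omega
      · by_cases h1 : q'.1.1 = k/2
        · rw [if_pos h1, if_neg (by omega)]; push_cast; omega
        · rw [if_neg h1, if_pos (by omega)]; push_cast; omega
    · exact h.elim
    · -- r-vertex vs centre
      obtain ⟨e1, e2, e3⟩ := DF_entries q.2
      have b1 := valsF_le e1
      have b2 := valsF_le e2
      show (if q.1.1 = k/2 then (q.1.2 : ℤ) else (q.1.1 : ℤ)) ≠ sg q.1 * ((k/2 : ℕ) : ℤ)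
      unfold sg
      rcases h with ht | ht
      · rw [if_pos ht, if_neg (by omega)]; push_cast; omega
      · by_cases h1 : q.1.1 = k/2
        · rw [if_pos h1, if_neg (by omega)]; push_cast; omega
        · rw [if_neg h1, if_pos (by omega)]; push_cast; omega
    · exact h.elim
    · -- r-vertex vs l-vertex
      have hnt := DF_not_top (by omega : 2 ≤ k) (h ▸ l'.2)
      unfold topP at hnt
      push_neg at hnt
      obtain ⟨e1, e2, e3⟩ := DF_entries q.2
      show (if q.1.1 = k/2 then (q.1.2 : ℤ) else (q.1.1 : ℤ)) ≠ sg q.1 * (l'.1.2 : ℤ)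
      rw [if_neg hnt.1, ← h]
      have hne : ¬ (q.1.1 = 0 ∧ q.1.2 = 0) := by
        intro ⟨a1, a2⟩; exact e3 (Prod.ext a1 a2)
      unfold sg
      split_ifs with hlt
      · push_cast; omega
      · push_cast; omega
    · exact h.elim
    · -- l-vertex vs r-vertex
      have hnt := DF_not_top (by omega : 2 ≤ k) (h ▸ l.2)
      unfold topP at hnt
      push_neg at hnt
      obtain ⟨e1, e2, e3⟩ := DF_entries q'.2
      show (l.1.2 : ℤ) ≠ sg q'.1 * (if q'.1.1 = k/2 then (q'.1.2 : ℤ) else (q'.1.1 : ℤ))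
      rw [if_neg hnt.1, ← h]
      have hne : ¬ (q'.1.1 = 0 ∧ q'.1.2 = 0) := by
        intro ⟨a1, a2⟩; exact e3 (Prod.ext a1 a2)
      unfold sg
      split_ifs with hlt
      · push_cast; omega
      · push_cast; omega
    · exact h.elim
  · -- all mixed edge types
    intro i j hi hj hij
    have hi' := mem_valsF.2 hi
    have hj' := mem_valsF.2 hj
    have hne1 : (i, j) ≠ ((0 : ℕ), (0 : ℕ)) := by
      intro hc; cases hc; exact hij rfl
    have hne2 : (j, i) ≠ ((0 : ℕ), (0 : ℕ)) := by
      intro hc; cases hc; exact hij rfl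
    have r1 := realize0 hk (mem_DF hi' hj' hne1)
    have r2 := realize0 hk (mem_DF hj' hi' hne2)
    rcases lt_or_gt_of_ne hij with hlt | hlt
    · refine ⟨by rwa [sg, if_pos hlt] at r1, ?_⟩
      rw [sg, if_neg (by omega)] at r2
      exact hasEdgeType_swap (sig0_symm k) r2
    · refine ⟨?_, by rwa [sg, if_neg (by omega)] at r1⟩
      rw [sg, if_pos hlt] at r2
      exact hasEdgeType_swap (sig0_symm k) r2
  · -- negative loops
    intro i hi1 hi
    have hi' := mem_valsF.2 hi
    have hne : (i, i) ≠ ((0 : ℕ), (0 : ℕ)) := by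
      intro hc; cases hc; omega
    have r := realize0 hk (mem_DF hi' hi' hne)
    rwa [sg, if_neg (by omega)] at r

/-! ### the deleted graph G1 -/

abbrev V1 (k : ℕ) := {x // x ∈ DF k} ⊕ {x // x ∈ DF (k-2)}

def G1 (k : ℕ) : SimpleGraph (V1 k) := SimpleGraph.comap Sum.inr (G0 k)

def sig1 (k : ℕ) (x y : V1 k) : ℤ := sig0 k (Sum.inr x) (Sum.inr y)

lemma sig1_symm (k : ℕ) : ∀ u v, sig1 k u v = sig1 k v u :=
  fun u v => sig0_symm k _ _

lemma sig1_sig (k : ℕ) : IsSignature (sig1 k) :=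
  ⟨sig1_symm k, fun u v => (sig0_sig k).2 _ _⟩

def c0 (k : ℕ) : ℤ := if Even k then 1 else 0

lemma c0_mem {k : ℕ} (hk : 3 ≤ k) : c0 k ∈ colourSet (k-2) := by
  have hpar : Even (k-2) ↔ Even k := by
    rw [Nat.even_iff, Nat.even_iff]; omega
  unfold c0 colourSet
  split_ifs with h1 h2 h2
  · have hk4 : 4 ≤ k := by
      rcases Nat.even_iff.1 h2 with h; omega
    refine ⟨by norm_num, ?_⟩
    simp only [Int.natAbs_one]
    omega
  · exact absurd (hpar.1 h1) h2
  · exact absurd (hpar.2 h2) h1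
  · simp

def phi1 (k : ℕ) : V1 k → ℤ
  | Sum.inl q => if topP k q.1 then c0 k else (q.1.1 : ℤ)
  | Sum.inr l => (l.1.2 : ℤ)

lemma c0_nonneg (k : ℕ) : 0 ≤ c0 k := by
  unfold c0; split_ifs <;> norm_num

lemma phi1_nonneg (k : ℕ) : ∀ x, 0 ≤ phi1 k x := by
  rintro (q | l)
  · simp only [phi1]; split_ifs
    · exact c0_nonneg k
    · exact Int.natCast_nonneg _
  · exact Int.natCast_nonneg _

lemma realize1 {k : ℕ} (hk : 3 ≤ k) {p : ℕ × ℕ} (hp : p ∈ DF (k-2)) :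
    HasEdgeType (G1 k) (sig1 k) (phi1 k) p.1 p.2 (sg p) := by
  have hred := redSign_of_nonneg (sig1 k) (phi1_nonneg k)
  have hnt : ¬ topP k p := DF_not_top (by omega) hp
  refine ⟨Sum.inl ⟨p, DF_sub (by omega) hp⟩, Sum.inr ⟨p, hp⟩, rfl, ?_, ?_, ?_⟩
  · simp only [phi1, if_neg hnt, Int.natAbs_natCast]
  · simp only [phi1, Int.natAbs_natCast]
  · rw [hred]; rfl

lemma complete1 {k : ℕ} (hk : 3 ≤ k) :
    IsCompleteColouring (G1 k) (sig1 k) (k-2) (phi1 k) := by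
  refine ⟨⟨?_, ?_⟩, ?_, ?_⟩
  · -- colours in colour set
    rintro (q | l)
    · simp only [phi1]; split_ifs with ht
      · exact c0_mem hk
      · exact mem_valsF.1 (DF_entries (DF_low (by omega) q.2 ht)).1
    · exact mem_valsF.1 (DF_entries l.2).2.1
  · -- proper
    rintro (q | l) (q' | l') h
    · exact h.elim
    · -- r-vertex vs l-vertex
      have h' : q.1 = l'.1 := h
      have hnt : ¬ topP k q.1 := DF_not_top (by omega : 2 ≤ k) (h' ▸ l'.2)
      obtain ⟨e1, e2, e3⟩ := DF_entries q.2
      show (if topP k q.1 then c0 k else (q.1.1 : ℤ)) ≠ sig1 k _ _ * (l'.1.2 : ℤ)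
      have hs : sig1 k (Sum.inl q) (Sum.inr l') = sg q.1 := rfl
      rw [if_neg hnt, hs, ← h']
      have hne : ¬ (q.1.1 = 0 ∧ q.1.2 = 0) := by
        intro ⟨a1, a2⟩; exact e3 (Prod.ext a1 a2)
      unfold sg
      split_ifs with hlt
      · push_cast; omega
      · push_cast; omega
    · -- l-vertex vs r-vertex
      have h' : q'.1 = l.1 := h
      have hnt : ¬ topP k q'.1 := DF_not_top (by omega : 2 ≤ k) (h' ▸ l.2)
      obtain ⟨e1, e2, e3⟩ := DF_entries q'.2
      show (l.1.2 : ℤ) ≠ sig1 k _ _ * (if topP k q'.1 then c0 k else (q'.1.1 : ℤ))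
      have hs : sig1 k (Sum.inr l) (Sum.inl q') = sg q'.1 := rfl
      rw [if_neg hnt, hs, ← h']
      have hne : ¬ (q'.1.1 = 0 ∧ q'.1.2 = 0) := by
        intro ⟨a1, a2⟩; exact e3 (Prod.ext a1 a2)
      unfold sg
      split_ifs with hlt
      · push_cast; omega
      · push_cast; omega
    · exact h.elim
  · -- all mixed edge types
    intro i j hi hj hij
    have hi' := mem_valsF.2 hi
    have hj' := mem_valsF.2 hj
    have hne1 : (i, j) ≠ ((0 : ℕ), (0 : ℕ)) := by
      intro hc; cases hc; exact hij rfl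
    have hne2 : (j, i) ≠ ((0 : ℕ), (0 : ℕ)) := by
      intro hc; cases hc; exact hij rfl
    have r1 := realize1 hk (mem_DF hi' hj' hne1)
    have r2 := realize1 hk (mem_DF hj' hi' hne2)
    rcases lt_or_gt_of_ne hij with hlt | hlt
    · refine ⟨by rwa [sg, if_pos hlt] at r1, ?_⟩
      rw [sg, if_neg (by omega)] at r2
      exact hasEdgeType_swap (sig1_symm k) r2
    · refine ⟨?_, by rwa [sg, if_neg (by omega)] at r1⟩
      rw [sg, if_pos hlt] at r2
      exact hasEdgeType_swap (sig1_symm k) r2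
  · -- negative loops
    intro i hi1 hi
    have hi' := mem_valsF.2 hi
    have hne : (i, i) ≠ ((0 : ℕ), (0 : ℕ)) := by
      intro hc; cases hc; omega
    have r := realize1 hk (mem_DF hi' hi' hne)
    rwa [sg, if_neg (by omega)] at r

/-! ### upper bounds via counting -/

def dec0 (k : ℕ) : V0 k → V0 k → ℕ × ℕ
  | Sum.inr (Sum.inl q), _ => q.1
  | _, Sum.inr (Sum.inl q) => q.1
  | _, _ => (0,0)

def nbr0 (k : ℕ) (hk : 2 ≤ k) (q : {x // x ∈ DF k}) : V0 k :=
  if h : topP k q.1 then Sum.inl () else Sum.inr (Sum.inr ⟨q.1, DF_low hk q.2 h⟩)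

lemma adj0_char {k : ℕ} (hk : 2 ≤ k) {x y : V0 k} (h : (G0 k).Adj x y) :
    ∃ q : {x // x ∈ DF k}, dec0 k x y = q.1 ∧
      ((x = Sum.inr (Sum.inl q) ∧ y = nbr0 k hk q) ∨
       (y = Sum.inr (Sum.inl q) ∧ x = nbr0 k hk q)) := by
  rcases x with u | q | l <;> rcases y with u' | q' | l'
  · exact h.elim
  · -- centre -- r-vertex
    refine ⟨q', rfl, Or.inr ⟨rfl, ?_⟩⟩
    rw [nbr0, dif_pos (show topP k q'.1 from h)]
  · exact h.elim
  · -- r-vertex -- centre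
    refine ⟨q, rfl, Or.inl ⟨rfl, ?_⟩⟩
    rw [nbr0, dif_pos (show topP k q.1 from h)]
  · exact h.elim
  · -- r-vertex -- l-vertex
    have h' : q.1 = l'.1 := h
    have hnt : ¬ topP k q.1 := DF_not_top hk (h' ▸ l'.2)
    refine ⟨q, rfl, Or.inl ⟨rfl, ?_⟩⟩
    rw [nbr0, dif_neg hnt]
    exact congrArg _ (congrArg _ (Subtype.ext h'.symm))
  · exact h.elim
  · -- l-vertex -- r-vertex
    have h' : q'.1 = l.1 := h
    have hnt : ¬ topP k q'.1 := DF_not_top hk (h' ▸ l.2)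
    refine ⟨q', rfl, Or.inr ⟨rfl, ?_⟩⟩
    rw [nbr0, dif_neg hnt]
    exact congrArg _ (congrArg _ (Subtype.ext h'.symm))
  · exact h.elim

lemma upper0 {k : ℕ} (hk : 3 ≤ k) (k' : ℕ)
    (h : AdmitsComplete (G0 k) (sig0 k) k') : k' ≤ k := by
  by_contra hgt
  push_neg at hgt
  obtain ⟨σ', hsig, -, φ, hφ⟩ := h
  have hcard := counting hsig.1 hφ (dec0 k) (DF k) ?_ ?_
  · exact absurd hcard (not_le.2 (DF_mono (by omega) hgt))
  · rintro (u | q | l) (u' | q' | l') h <;> first | exact h.elim | exact q'.2 | exact q.2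
  · intro u v u' v' h h' hd
    obtain ⟨q, e, hc⟩ := adj0_char (by omega) h
    obtain ⟨q', e', hc'⟩ := adj0_char (by omega) h'
    have hqq : q' = q := Subtype.ext (by rw [← e, ← e', hd])
    subst hqq
    rcases hc with ⟨hx, hy⟩ | ⟨hy, hx⟩ <;> rcases hc' with ⟨hx', hy'⟩ | ⟨hy', hx'⟩
    · exact Or.inl ⟨hx'.trans hx.symm, hy'.trans hy.symm⟩
    · exact Or.inr ⟨hx'.trans hy.symm, hy'.trans hx.symm⟩
    · exact Or.inr ⟨hx'.trans hy.symm, hy'.trans hx.symm⟩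
    · exact Or.inl ⟨hx'.trans hx.symm, hy'.trans hy.symm⟩

def dec1 (k : ℕ) : V1 k → V1 k → ℕ × ℕ
  | Sum.inl q, _ => q.1
  | _, Sum.inl q => q.1
  | _, _ => (0,0)

lemma upper1 {k : ℕ} (hk : 3 ≤ k) (k' : ℕ)
    (h : AdmitsComplete (G1 k) (sig1 k) k') : k' ≤ k - 2 := by
  by_contra hgt
  push_neg at hgt
  obtain ⟨σ', hsig, -, φ, hφ⟩ := h
  have hcard := counting hsig.1 hφ (dec1 k) (DF (k-2)) ?_ ?_
  · exact absurd hcard (not_le.2 (DF_mono (by omega) hgt))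
  · rintro (q | l) (q' | l') h
    · exact h.elim
    · have h' : q.1 = l'.1 := h
      show q.1 ∈ DF (k-2)
      rw [h']; exact l'.2
    · have h' : q'.1 = l.1 := h
      show q'.1 ∈ DF (k-2)
      rw [h']; exact l.2
    · exact h.elim
  · intro u v u' v' h h' hd
    rcases u with q | l <;> rcases v with q' | l' <;>
      rcases u' with q'' | l'' <;> rcases v' with q''' | l''' <;>
      first
        | exact h.elim
        | exact h'.elim
        | skip
    · -- (q, l') and (q'', l''')
      have e1 : q.1 = l'.1 := h
      have e2 : q''.1 = l'''.1 := h'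
      have e3 : q.1 = q''.1 := hd
      refine Or.inl ⟨?_, ?_⟩
      · exact congrArg _ (Subtype.ext e3.symm)
      · exact congrArg _ (Subtype.ext (by rw [← e2, ← e3, e1]))
    · -- (q, l') and (l'', q''')
      have e1 : q.1 = l'.1 := h
      have e2 : q'''.1 = l''.1 := h'
      have e3 : q.1 = q'''.1 := hd
      refine Or.inr ⟨?_, ?_⟩
      · exact congrArg _ (Subtype.ext (by rw [← e2, ← e3, e1]))
      · exact congrArg _ (Subtype.ext e3.symm)
    · -- (l, q') and (q'', l''')
      have e1 : q'.1 = l.1 := h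
      have e2 : q''.1 = l'''.1 := h'
      have e3 : q'.1 = q''.1 := hd
      refine Or.inr ⟨?_, ?_⟩
      · exact congrArg _ (Subtype.ext e3.symm)
      · exact congrArg _ (Subtype.ext (by rw [← e2, ← e3, e1]))
    · -- (l, q') and (l'', q''')
      have e1 : q'.1 = l.1 := h
      have e2 : q'''.1 = l''.1 := h'
      have e3 : q'.1 = q'''.1 := hd
      refine Or.inl ⟨?_, ?_⟩
      · exact congrArg _ (Subtype.ext (by rw [← e2, ← e3, e1]))
      · exact congrArg _ (Subtype.ext e3.symm)

lemma switch_refl {V : Type*} (σ : V → V → ℤ) : SwitchEquiv σ σ :=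
  ⟨fun _ => 1, fun _ => Or.inl rfl, fun u v => by ring⟩

lemma psi0 {k : ℕ} (hk : 3 ≤ k) : psi (G0 k) (sig0 k) = k :=
  psi_eq _ _ _ ⟨sig0 k, sig0_sig k, switch_refl _, phi0 k, complete0 hk⟩ (upper0 hk)

lemma psi1 {k : ℕ} (hk : 3 ≤ k) : psi (G1 k) (sig1 k) = k - 2 :=
  psi_eq _ _ _ ⟨sig1 k, sig1_sig k, switch_refl _, phi1 k, complete1 hk⟩ (upper1 hk)

/-! ### final assembly -/

def unitComplEquiv {β : Type*} : {x : Unit ⊕ β // x ≠ Sum.inl ()} ≃ β where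
  toFun x := match x with
    | ⟨Sum.inl (), h⟩ => absurd rfl h
    | ⟨Sum.inr b, _⟩ => b
  invFun b := ⟨Sum.inr b, Sum.inr_ne_inl⟩
  left_inv x := match x with
    | ⟨Sum.inl (), h⟩ => absurd rfl h
    | ⟨Sum.inr b, _⟩ => rfl
  right_inv b := rfl

lemma unitComplEquiv_spec {β : Type*} (x : {x : Unit ⊕ β // x ≠ Sum.inl ()}) :
    Sum.inr (unitComplEquiv x) = x.1 :=
  match x with
  | ⟨Sum.inl (), h⟩ => absurd rfl h
  | ⟨Sum.inr b, _⟩ => rfl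


/-- For every `k ≥ 3`, there is a signed graph `(G,σ)` with `ψ(G,σ) = k`
containing a vertex `v` such that `ψ(G − v, σ) = k − 2`. -/
theorem statement8 (k : ℕ) (hk : 3 ≤ k) :
    ∃ (n : ℕ) (G : SimpleGraph (Fin n)) (σ : Fin n → Fin n → ℤ) (v : Fin n),
      IsSignature σ ∧ psi G σ = k ∧
      psi (G.induce {u | u ≠ v}) (fun a b => σ a.1 b.1) = k - 2 := by
  classical
  refine ⟨Fintype.card (V0 k),
    SimpleGraph.comap (Fintype.equivFin (V0 k)).symm (G0 k),
    fun a b => sig0 k ((Fintype.equivFin (V0 k)).symm a) ((Fintype.equivFin (V0 k)).symm b),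
    (Fintype.equivFin (V0 k)) (Sum.inl ()),
    ⟨fun a b => sig0_symm k _ _, fun a b => (sig0_sig k).2 _ _⟩, ?_, ?_⟩
  · rw [psi_transport (Fintype.equivFin (V0 k)).symm (G := G0 k) (σ := sig0 k)
      (fun a b => Iff.rfl) (fun a b => rfl)]
    exact psi0 hk
  ·
    set e := (Fintype.equivFin (V0 k)).symm with he
    set v := (Fintype.equivFin (V0 k)) (Sum.inl ()) with hv
    have hviff : ∀ u : Fin (Fintype.card (V0 k)), u ≠ v ↔ e u ≠ Sum.inl () := by
      intro u
      constructor
      · intro h hc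
        exact h (by rw [hv, ← hc, he]; simp)
      · intro h hc
        exact h (by rw [hc, he, hv]; simp)
    set e2 : {u // u ∈ {u : Fin (Fintype.card (V0 k)) | u ≠ v}} ≃ V1 k :=
      (Equiv.subtypeEquiv e hviff).trans unitComplEquiv with he2
    have hspec : ∀ a : {u // u ∈ {u : Fin (Fintype.card (V0 k)) | u ≠ v}},
        Sum.inr (e2 a) = e a.1 := by
      intro a
      rw [he2]
      exact unitComplEquiv_spec ⟨e a.1, (hviff a.1).1 a.2⟩
    have hA : ∀ a b, ((SimpleGraph.comap e (G0 k)).induce {u | u ≠ v}).Adj a b ↔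
        (G1 k).Adj (e2 a) (e2 b) := by
      intro a b
      have h1 : ((SimpleGraph.comap e (G0 k)).induce {u | u ≠ v}).Adj a b ↔
          (G0 k).Adj (e a.1) (e b.1) := by
        simp [SimpleGraph.comap_adj]
      have h2 : (G1 k).Adj (e2 a) (e2 b) ↔
          (G0 k).Adj (Sum.inr (e2 a)) (Sum.inr (e2 b)) := Iff.rfl
      rw [h1, h2, hspec a, hspec b]
    have hτ : ∀ a b, (fun (a b : {u // u ∈ {u : Fin (Fintype.card (V0 k)) | u ≠ v}}) =>
        sig0 k (e a.1) (e b.1)) a b = sig1 k (e2 a) (e2 b) := by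
      intro a b
      show sig0 k (e a.1) (e b.1) = sig0 k (Sum.inr (e2 a)) (Sum.inr (e2 b))
      rw [hspec a, hspec b]
    rw [psi_transport e2 hA hτ]
    exact psi1 hk
end

section
/- If (H,π) is an induced signed subgraph of a signed graph (G,σ) (i.e., H is an induced subgraph of G and π is the restriction of σ to E(H)), then ψ(H,π) ≤ ψ(G,σ). -/
open SimpleGraph

section Helpers
variable {V : Type*}

lemma isgn_pm (x : ℤ) : isgn x = 1 ∨ isgn x = -1 := by
  unfold isgn; split <;> simp

lemma mul_pm {a b : ℤ} (ha : a = 1 ∨ a = -1) (hb : b = 1 ∨ b = -1) :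
    a * b = 1 ∨ a * b = -1 := by rcases ha with h|h <;> rcases hb with h'|h' <;> simp [h, h']

lemma neq_sign_symm {σ0 a b : ℤ} (h : σ0 = 1 ∨ σ0 = -1) : a ≠ σ0 * b ↔ b ≠ σ0 * a := by
  rcases h with h|h <;> subst h <;> constructor <;> intro h1 h2 <;> omega

lemma sign_natAbs {σ0 c x : ℤ} (h : σ0 = 1 ∨ σ0 = -1) (hc : c = σ0 * x) :
    x.natAbs = c.natAbs := by
  rcases h with h|h <;> subst h <;> simp [hc]

lemma sign_isgn {σ0 c x : ℤ} (h : σ0 = 1 ∨ σ0 = -1) (hc : c = σ0 * x) (h0 : c ≠ 0) :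
    isgn x * σ0 = isgn c := by
  rcases h with h|h <;> subst h <;> unfold isgn <;> split_ifs <;> omega

lemma mem_colourSet_natAbs_le {k : ℕ} {i : ℤ} (h : i ∈ colourSet k) : i.natAbs ≤ k / 2 := by
  unfold colourSet at h; split at h
  · exact h.2
  · exact h

lemma mem_colourSet_even_ne {k : ℕ} {i : ℤ} (hk : Even k) (h : i ∈ colourSet k) : i ≠ 0 := by
  unfold colourSet at h; rw [if_pos hk] at h; exact h.1

lemma mem_colourSet_of {k : ℕ} {i : ℤ} (h0 : i ≠ 0) (h : i.natAbs ≤ k / 2) :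
    i ∈ colourSet k := by
  unfold colourSet; split
  · exact ⟨h0, h⟩
  · exact h

lemma zero_mem_colourSet {k : ℕ} (hk : ¬ Even k) : (0 : ℤ) ∈ colourSet k := by
  unfold colourSet; rw [if_neg hk]; simp

lemma colourSet_succ_of_even {k : ℕ} (hk : Even k) {i : ℤ} (h : i ∈ colourSet k) :
    i ∈ colourSet (k + 1) := by
  unfold colourSet at h ⊢
  rw [if_pos hk] at h
  rw [if_neg (by simpa using hk.add_one)]
  obtain ⟨n, hn⟩ := hk
  have : (k + 1) / 2 = k / 2 := by omega
  rw [this]; exact h.2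

lemma colourSet_succ_of_odd {k : ℕ} (hk : ¬ Even k) {i : ℤ} (h : i ∈ colourSet k)
    (h0 : i ≠ 0) : i ∈ colourSet (k + 1) := by
  unfold colourSet at h ⊢
  rw [if_neg hk] at h
  rw [if_pos (Nat.even_add_one.2 hk)]
  exact ⟨h0, le_trans h (by omega)⟩

end Helpers
section OnDefs
variable {V : Type*}

/-- Properness restricted to a set of vertices. -/
def POn (G : SimpleGraph V) (σ : V → V → ℤ) (k : ℕ) (φ : V → ℤ) (s : Set V) : Prop :=
  (∀ v ∈ s, φ v ∈ colourSet k) ∧ ∀ u ∈ s, ∀ w ∈ s, G.Adj u w → φ u ≠ σ u w * φ w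

/-- Edge-type existence restricted to a set of vertices. -/
def HEOn (G : SimpleGraph V) (σ : V → V → ℤ) (φ : V → ℤ) (i j : ℕ) (sg : ℤ)
    (s : Set V) : Prop :=
  ∃ u ∈ s, ∃ w ∈ s, G.Adj u w ∧ (φ u).natAbs = i ∧ (φ w).natAbs = j ∧ redSign σ φ u w = sg

/-- Completeness restricted to a set of vertices. -/
def COn (G : SimpleGraph V) (σ : V → V → ℤ) (k : ℕ) (φ : V → ℤ) (s : Set V) : Prop :=
  POn G σ k φ s ∧
  (∀ i j : ℕ, (i : ℤ) ∈ colourSet k → (j : ℤ) ∈ colourSet k → i ≠ j →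
    HEOn G σ φ i j 1 s ∧ HEOn G σ φ i j (-1) s) ∧
  (∀ i : ℕ, 1 ≤ i → (i : ℤ) ∈ colourSet k → HEOn G σ φ i i (-1) s)

/-- Admitting a complete colouring on a set via an equivalent signature. -/
def AdmOn (G : SimpleGraph V) (σ : V → V → ℤ) (k : ℕ) (s : Set V) : Prop :=
  ∃ σ', IsSignature σ' ∧ SwitchEquiv σ σ' ∧ ∃ φ, COn G σ' k φ s

lemma HEOn_mono {G : SimpleGraph V} {σ φ i j sg} {s t : Set V} (hst : s ⊆ t)
    (h : HEOn G σ φ i j sg s) : HEOn G σ φ i j sg t := by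
  obtain ⟨u, hu, w, hw, h1, h2, h3, h4⟩ := h
  exact ⟨u, hst hu, w, hst hw, h1, h2, h3, h4⟩

lemma HEOn_congr {G : SimpleGraph V} {σ : V → V → ℤ} {φ φ' : V → ℤ} {i j sg} {s : Set V}
    (hφ : ∀ u ∈ s, φ u = φ' u) (h : HEOn G σ φ i j sg s) : HEOn G σ φ' i j sg s := by
  obtain ⟨u, hu, w, hw, h1, h2, h3, h4⟩ := h
  refine ⟨u, hu, w, hw, h1, ?_, ?_, ?_⟩
  · rw [← hφ u hu]; exact h2
  · rw [← hφ w hw]; exact h3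
  · unfold redSign at h4 ⊢; rw [← hφ u hu, ← hφ w hw]; exact h4

lemma HEOn_symm {G : SimpleGraph V} {σ : V → V → ℤ} {φ i j sg} {s : Set V}
    (hσ : ∀ u w, σ u w = σ w u) (h : HEOn G σ φ i j sg s) : HEOn G σ φ j i sg s := by
  obtain ⟨u, hu, w, hw, h1, h2, h3, h4⟩ := h
  refine ⟨w, hw, u, hu, h1.symm, h3, h2, ?_⟩
  unfold redSign at h4 ⊢
  rw [hσ w u, mul_comm (isgn (φ w)) (isgn (φ u))]; exact h4

lemma COn_univ_iff {G : SimpleGraph V} {σ : V → V → ℤ} {k φ} :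
    COn G σ k φ Set.univ ↔ IsCompleteColouring G σ k φ := by
  constructor
  · rintro ⟨⟨p1, p2⟩, c2, c3⟩
    refine ⟨⟨fun v => p1 v trivial, fun u w h => p2 u trivial w trivial h⟩, ?_, ?_⟩
    · intro i j hi hj hij
      obtain ⟨⟨u,_,w,_,h⟩, ⟨u',_,w',_,h'⟩⟩ := c2 i j hi hj hij
      exact ⟨⟨u,w,h⟩, ⟨u',w',h'⟩⟩
    · intro i h1 h2
      obtain ⟨u,_,w,_,h⟩ := c3 i h1 h2
      exact ⟨u,w,h⟩
  · rintro ⟨⟨p1, p2⟩, c2, c3⟩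
    refine ⟨⟨fun v _ => p1 v, fun u _ w _ h => p2 u w h⟩, ?_, ?_⟩
    · intro i j hi hj hij
      obtain ⟨⟨u,w,h⟩, ⟨u',w',h'⟩⟩ := c2 i j hi hj hij
      exact ⟨⟨u,trivial,w,trivial,h⟩, ⟨u',trivial,w',trivial,h'⟩⟩
    · intro i h1 h2
      obtain ⟨u,w,h⟩ := c3 i h1 h2
      exact ⟨u,trivial,w,trivial,h⟩

end OnDefs
section Bridge
variable {V : Type*}

lemma admOn_of_induce {G : SimpleGraph V} {σ : V → V → ℤ} (hσ : IsSignature σ)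
    {s : Set V} {k : ℕ}
    (h : AdmitsComplete (G.induce s) (fun a b => σ a.1 b.1) k) : AdmOn G σ k s := by
  classical
  obtain ⟨σh, hsig, ⟨s0, hs0, hswe⟩, φ, hcc⟩ := h
  set t : V → ℤ := fun u => if h : u ∈ s then s0 ⟨u, h⟩ else 1 with ht_def
  have ht : ∀ u, t u = 1 ∨ t u = -1 := by
    intro u; simp only [ht_def]; split
    · apply hs0
    · left; rfl
  set Φ : V → ℤ := fun u => if h : u ∈ s then φ ⟨u, h⟩ else 0 with hΦ_def
  have hΦ : ∀ (u : V) (hu : u ∈ s), Φ u = φ ⟨u, hu⟩ := by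
    intro u hu; simp only [hΦ_def, dif_pos hu]
  refine ⟨fun u w => t u * t w * σ u w, ⟨?_, ?_⟩, ⟨t, ht, fun u w => rfl⟩, Φ, ?_⟩
  · intro u w; beta_reduce; rw [hσ.1 u w]; ring
  · intro u w; exact mul_pm (mul_pm (ht u) (ht w)) (hσ.2 u w)
  · have key : ∀ (u : V) (hu : u ∈ s) (w : V) (hw : w ∈ s),
        t u * t w * σ u w = σh ⟨u, hu⟩ ⟨w, hw⟩ := by
      intro u hu w hw
      rw [hswe ⟨u, hu⟩ ⟨w, hw⟩]
      simp only [ht_def, dif_pos hu, dif_pos hw]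
    obtain ⟨⟨p1, p2⟩, c2, c3⟩ := hcc
    have conv : ∀ (i j : ℕ) sg, HasEdgeType (G.induce s) σh φ i j sg →
        HEOn G (fun u w => t u * t w * σ u w) Φ i j sg s := by
      rintro i j sg ⟨u, w, hadj, h1, h2, h3⟩
      refine ⟨u.1, u.2, w.1, w.2, hadj, ?_, ?_, ?_⟩
      · rw [hΦ u.1 u.2]; exact h1
      · rw [hΦ w.1 w.2]; exact h2
      · unfold redSign at h3 ⊢
        beta_reduce
        rw [hΦ u.1 u.2, hΦ w.1 w.2, key u.1 u.2 w.1 w.2]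
        exact h3
    refine ⟨⟨?_, ?_⟩, ?_, ?_⟩
    · intro u hu; rw [hΦ u hu]; exact p1 ⟨u, hu⟩
    · intro u hu w hw hadj
      beta_reduce
      rw [hΦ u hu, hΦ w hw, key u hu w hw]
      exact p2 ⟨u, hu⟩ ⟨w, hw⟩ hadj
    · intro i j hi hj hij
      obtain ⟨e1, e2⟩ := c2 i j hi hj hij
      exact ⟨conv i j 1 e1, conv i j (-1) e2⟩
    · intro i h1 h2
      exact conv i i (-1) (c3 i h1 h2)

end Bridge
section MoreHelpers
variable {V : Type*}

lemma neq_of_natAbs {σ0 a b : ℤ} (hs : σ0 = 1 ∨ σ0 = -1) (h : a.natAbs ≠ b.natAbs) :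
    a ≠ σ0 * b := by
  intro he; apply h; rw [he, ← sign_natAbs hs rfl]

lemma isgn_zero : isgn (0 : ℤ) = 1 := by unfold isgn; split_ifs <;> omega

lemma isgn_natCast (i : ℕ) : isgn (i : ℤ) = 1 := by unfold isgn; split_ifs <;> omega

lemma isgn_mul_pos {δ x : ℤ} (hδ : δ = 1 ∨ δ = -1) (hx : 0 < x) : isgn (δ * x) = δ := by
  rcases hδ with h|h <;> subst h <;> unfold isgn <;> split_ifs <;> omega

lemma natAbs_sign_mul {δ : ℤ} (hδ : δ = 1 ∨ δ = -1) (x : ℤ) :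
    (δ * x).natAbs = x.natAbs := by
  rcases hδ with h|h <;> subst h <;> simp

lemma zero_ne_sign_mul {σ0 x : ℤ} (hs : σ0 = 1 ∨ σ0 = -1) (hx : x ≠ 0) :
    (0 : ℤ) ≠ σ0 * x := by rcases hs with h|h <;> subst h <;> omega

end MoreHelpers
section Extend
variable {V : Type*}

lemma extend_step {G : SimpleGraph V} {σ : V → V → ℤ} {k : ℕ} {s : Set V} {v : V}
    (hv : v ∉ s) (h : AdmOn G σ k s) : ∃ k', k ≤ k' ∧ AdmOn G σ k' (insert v s) := by
  classical
  obtain ⟨σ', hsig, hswe, φ, ⟨p1, p2⟩, c2, c3⟩ := h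
  have hsym := hsig.1
  have hval := hsig.2
  by_cases hA : ∃ c ∈ colourSet k, ∀ u ∈ s, G.Adj v u → c ≠ σ' v u * φ u
  · -- a free colour exists: extend with the same k
    obtain ⟨c, hc, hfree⟩ := hA
    refine ⟨k, le_refl k, σ', hsig, hswe, Function.update φ v c, ⟨?_, ?_⟩, ?_, ?_⟩
    · intro u hu
      rcases hu with rfl | hu
      · rwa [Function.update_self]
      · rw [Function.update_of_ne (by rintro rfl; exact hv hu)]
        exact p1 u hu
    · intro u hu w hw hadj
      have hne : ∀ x ∈ s, x ≠ v := fun x hx he => hv (he ▸ hx)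
      rcases hu with rfl | hu <;> rcases hw with rfl | hw
      · exact absurd hadj (G.loopless.irrefl _)
      · rw [Function.update_self, Function.update_of_ne (hne w hw)]
        exact hfree w hw hadj
      · rw [Function.update_self, Function.update_of_ne (hne u hu)]
        have h2 := hfree u hu hadj.symm
        rw [hsym _ u] at h2
        exact (neq_sign_symm (hval u _)).1 h2
      · rw [Function.update_of_ne (hne u hu), Function.update_of_ne (hne w hw)]
        exact p2 u hu w hw hadj
    · intro i j hi hj hij
      obtain ⟨e1, e2⟩ := c2 i j hi hj hij
      have hcongr : ∀ u ∈ s, φ u = Function.update φ v c u := fun u hu =>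
        (Function.update_of_ne (by rintro rfl; exact hv hu) c φ).symm
      exact ⟨HEOn_mono (Set.subset_insert v s) (HEOn_congr hcongr e1),
        HEOn_mono (Set.subset_insert v s) (HEOn_congr hcongr e2)⟩
    · intro i h1 h2
      have hcongr : ∀ u ∈ s, φ u = Function.update φ v c u := fun u hu =>
        (Function.update_of_ne (by rintro rfl; exact hv hu) c φ).symm
      exact HEOn_mono (Set.subset_insert v s) (HEOn_congr hcongr (c3 i h1 h2))
  · -- every colour conflicts
    push_neg at hA
    by_cases hk : Even k
    · -- k even: give v the colour 0, extend to k+1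
      have hoddk1 : ¬ Even (k + 1) := by simpa using hk.add_one
      have hk2 : (k + 1) / 2 = k / 2 := by obtain ⟨n, hn⟩ := hk; omega
      have hne : ∀ x ∈ s, x ≠ v := fun x hx he => hv (he ▸ hx)
      set Φ := Function.update φ v 0 with hΦ_def
      have hΦs : ∀ u ∈ s, Φ u = φ u := fun u hu =>
        Function.update_of_ne (hne u hu) 0 φ
      have hΦv : Φ v = 0 := Function.update_self v 0 φ
      -- a conflict at a nonzero colour c gives an edge of type (0, |c|, isgn c)
      have conflict_edge : ∀ c : ℤ, c ∈ colourSet k →  c ≠ 0 →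
          HEOn G σ' Φ 0 c.natAbs (isgn c) (insert v s) := by
        intro c hcv hc0
        obtain ⟨u, hu, hadj, hcu⟩ := hA c hcv
        have hφu : Φ u = φ u := hΦs u hu
        refine ⟨v, Set.mem_insert v s, u, Set.mem_insert_of_mem v hu, hadj, ?_, ?_, ?_⟩
        · rw [hΦv]; rfl
        · rw [hφu, sign_natAbs (hval v u) hcu]
        · unfold redSign
          rw [hΦv, hφu, isgn_zero, one_mul]
          exact sign_isgn (hval v u) hcu hc0
      refine ⟨k + 1, Nat.le_succ k, σ', hsig, hswe, Φ, ⟨?_, ?_⟩, ?_, ?_⟩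
      · intro u hu
        rcases hu with rfl | hu
        · rw [hΦv]; exact zero_mem_colourSet hoddk1
        · rw [hΦs u hu]; exact colourSet_succ_of_even hk (p1 u hu)
      · intro u hu w hw hadj
        rcases hu with rfl | hu <;> rcases hw with rfl | hw
        · exact absurd hadj (G.loopless.irrefl _)
        · rw [hΦv, hΦs w hw]
          exact zero_ne_sign_mul (hval _ w) (mem_colourSet_even_ne hk (p1 w hw))
        · rw [hΦv, hΦs u hu, mul_zero]
          exact mem_colourSet_even_ne hk (p1 u hu)
        · rw [hΦs u hu, hΦs w hw]; exact p2 u hu w hw hadj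
      · intro i j hi hj hij
        have hmem : ∀ l : ℕ, 1 ≤ l → (l : ℤ) ∈ colourSet (k + 1) → (l : ℤ) ∈ colourSet k := by
          intro l hl hmem
          refine mem_colourSet_of (by exact_mod_cast Nat.cast_ne_zero.2 (by omega)) ?_
          have := mem_colourSet_natAbs_le hmem
          rwa [Int.natAbs_natCast, hk2] at this
        rcases Nat.eq_zero_or_pos i with rfl | hi1 <;> rcases Nat.eq_zero_or_pos j with rfl | hj1
        · exact absurd rfl hij
        · -- i = 0, j ≥ 1 : use conflicts at ±j
          have h1 := conflict_edge (j : ℤ) (hmem j hj1 hj) (by exact_mod_cast hj1.ne')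
          have h2 := conflict_edge (-(j : ℤ)) (by
              have := hmem j hj1 hj
              unfold colourSet at this ⊢
              split at this <;> split <;> simp_all [Int.natAbs_neg]) (by simp; omega)
          rw [Int.natAbs_natCast, isgn_natCast] at h1
          rw [Int.natAbs_neg, Int.natAbs_natCast] at h2
          have hisgn : isgn (-(j:ℤ)) = -1 := by unfold isgn; split_ifs <;> omega
          rw [hisgn] at h2
          exact ⟨h1, h2⟩
        · -- j = 0, i ≥ 1 : symmetric
          have h1 := conflict_edge (i : ℤ) (hmem i hi1 hi) (by exact_mod_cast hi1.ne')
          have h2 := conflict_edge (-(i : ℤ)) (by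
              have := hmem i hi1 hi
              unfold colourSet at this ⊢
              split at this <;> split <;> simp_all [Int.natAbs_neg]) (by simp; omega)
          rw [Int.natAbs_natCast, isgn_natCast] at h1
          rw [Int.natAbs_neg, Int.natAbs_natCast] at h2
          have hisgn : isgn (-(i:ℤ)) = -1 := by unfold isgn; split_ifs <;> omega
          rw [hisgn] at h2
          exact ⟨HEOn_symm hsym h1, HEOn_symm hsym h2⟩
        · -- both ≥ 1 : old witnesses
          obtain ⟨e1, e2⟩ := c2 i j (hmem i hi1 hi) (hmem j hj1 hj) hij
          exact ⟨HEOn_mono (Set.subset_insert v s) (HEOn_congr (fun u hu => (hΦs u hu).symm) e1),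
            HEOn_mono (Set.subset_insert v s) (HEOn_congr (fun u hu => (hΦs u hu).symm) e2)⟩
      · intro i h1 h2
        have hmem : (i : ℤ) ∈ colourSet k := by
          refine mem_colourSet_of (by exact_mod_cast Nat.cast_ne_zero.2 (by omega)) ?_
          have := mem_colourSet_natAbs_le h2
          rwa [Int.natAbs_natCast, hk2] at this
        exact HEOn_mono (Set.subset_insert v s)
          (HEOn_congr (fun u hu => (hΦs u hu).symm) (c3 i h1 hmem))
    · -- k odd: recolour the zero class and v to the new value m = k/2 + 1
      have hek1 : Even (k + 1) := Nat.even_add_one.2 hk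
      have hkmod : k % 2 = 1 := Nat.not_even_iff.1 hk
      obtain ⟨u0, hu0, hadj0, hcu0⟩ := hA 0 (zero_mem_colourSet hk)
      have hφu0 : φ u0 = 0 := by rcases hval v u0 with h|h <;> rw [h] at hcu0 <;> omega
      set m : ℕ := k / 2 + 1 with hm_def
      have hk2 : (k + 1) / 2 = m := by omega
      have hm1 : (1 : ℤ) ≤ (m : ℤ) := by exact_mod_cast Nat.succ_le_succ (Nat.zero_le _)
      set δ : ℤ := -σ' v u0 with hδ_def
      have hδ : δ = 1 ∨ δ = -1 := by
        rcases hval v u0 with h|h <;> rw [hδ_def, h] <;> [right; left] <;> norm_num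
      have hσvu0 : σ' v u0 = -δ := by rw [hδ_def]; ring
      have hu0v : u0 ≠ v := fun he => hv (he ▸ hu0)
      have hnev : ∀ x ∈ s, x ≠ v := fun x hx he => hv (he ▸ hx)
      set Φ : V → ℤ := fun w =>
        if w = v then δ * m else if w = u0 then (m : ℤ)
        else if w ∈ s ∧ φ w = 0 then -σ' w v * (δ * m) else φ w with hΦ_def
      have hΦv : Φ v = δ * m := by simp only [hΦ_def, if_pos rfl]
      have hΦu0 : Φ u0 = (m : ℤ) := by
        simp [hΦ_def, hu0v]
      have hΦz : ∀ z ∈ s, φ z = 0 → z ≠ u0 → Φ z = -σ' z v * (δ * m) := by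
        intro z hz hz0 hzu0
        simp only [hΦ_def]
        rw [if_neg (hnev z hz), if_neg hzu0, if_pos ⟨hz, hz0⟩]
      have hΦs' : ∀ u ∈ s, φ u ≠ 0 → Φ u = φ u := by
        intro u hu hu0'
        simp only [hΦ_def]
        rw [if_neg (hnev u hu), if_neg (by rintro rfl; exact hu0' hφu0),
          if_neg (fun hc => hu0' hc.2)]
      have hsgn2 : ∀ z w : V, -σ' z w = 1 ∨ -σ' z w = -1 := by
        intro z w; rcases hval z w with h|h <;> rw [h] <;> [right; left] <;> norm_num
      have habs_v : (Φ v).natAbs = m := by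
        rw [hΦv, natAbs_sign_mul hδ, Int.natAbs_natCast]
      have habs_u0 : (Φ u0).natAbs = m := by rw [hΦu0, Int.natAbs_natCast]
      have habsZ : ∀ z ∈ s, φ z = 0 → (Φ z).natAbs = m := by
        intro z hz hz0
        by_cases hzu : z = u0
        · subst hzu; exact habs_u0
        · rw [hΦz z hz hz0 hzu, natAbs_sign_mul (hsgn2 z v), natAbs_sign_mul hδ,
            Int.natAbs_natCast]
      have hsmall : ∀ u ∈ s, (φ u).natAbs ≤ k / 2 := fun u hu =>
        mem_colourSet_natAbs_le (p1 u hu)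
      have hind : ∀ z ∈ s, ∀ z' ∈ s, φ z = 0 → φ z' = 0 → ¬ G.Adj z z' := by
        intro z hz z' hz' h0 h0' hadj
        exact p2 z hz z' hz' hadj (by rw [h0, h0', mul_zero])
      have mem_of_abs : ∀ x : ℤ, x.natAbs = m → x ∈ colourSet (k + 1) := by
        intro x hx
        refine mem_colourSet_of (fun he => by rw [he] at hx; simp at hx) ?_
        rw [hx, hk2]
      -- old witnesses with nonzero values survive
      have HEOld : ∀ (i j : ℕ) (sg : ℤ), 1 ≤ i → 1 ≤ j → HEOn G σ' φ i j sg s →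
          HEOn G σ' Φ i j sg (insert v s) := by
        rintro i j sg hi hj ⟨u, hu, w, hw, hadj, h1, h2, h3⟩
        have hu0' : φ u ≠ 0 := fun he => by rw [he] at h1; simp at h1; omega
        have hw0' : φ w ≠ 0 := fun he => by rw [he] at h2; simp at h2; omega
        refine ⟨u, Set.mem_insert_of_mem v hu, w, Set.mem_insert_of_mem v hw, hadj, ?_, ?_, ?_⟩
        · rw [hΦs' u hu hu0']; exact h1
        · rw [hΦs' w hw hw0']; exact h2
        · unfold redSign at h3 ⊢; rw [hΦs' u hu hu0', hΦs' w hw hw0']; exact h3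
      have memk : ∀ l : ℕ, l ≤ k / 2 → (l : ℤ) ∈ colourSet k := by
        intro l hl; unfold colourSet; rw [if_neg hk]; simpa using hl
      -- edges from v to every old nonzero value, with both signs
      have conflict_big : ∀ i : ℕ, 1 ≤ i → i ≤ k / 2 → ∀ sg : ℤ, sg = 1 ∨ sg = -1 →
          HEOn G σ' Φ m i sg (insert v s) := by
        intro i hi1 hik sg hsg
        have hδsg : δ * sg = 1 ∨ δ * sg = -1 := mul_pm hδ hsg
        have hi0 : ((i : ℤ)) ≠ 0 := by exact_mod_cast Nat.cast_ne_zero.2 (by omega)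
        have hcabs : (δ * sg * (i : ℤ)).natAbs = i := by
          rw [mul_assoc, natAbs_sign_mul hδ, natAbs_sign_mul hsg, Int.natAbs_natCast]
        have hc0 : δ * sg * (i : ℤ) ≠ 0 := by
          intro he; rw [← Int.natAbs_eq_zero, hcabs] at he; omega
        have hcmem : δ * sg * (i : ℤ) ∈ colourSet k := by
          unfold colourSet; rw [if_neg hk]
          show (δ * sg * (i : ℤ)).natAbs ≤ k / 2
          rw [hcabs]; exact hik
        obtain ⟨u, hu, hadj, hcu⟩ := hA _ hcmem
        have hφu' : φ u ≠ 0 := by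
          intro h; rw [h, mul_zero] at hcu; exact hc0 hcu
        refine ⟨v, Set.mem_insert v s, u, Set.mem_insert_of_mem v hu, hadj, habs_v, ?_, ?_⟩
        · rw [hΦs' u hu hφu', sign_natAbs (hval v u) hcu, hcabs]
        · unfold redSign
          rw [hΦv, hΦs' u hu hφu']
          have h1 : isgn (φ u) * σ' v u = isgn (δ * sg * (i : ℤ)) :=
            sign_isgn (hval v u) hcu hc0
          have h2 : isgn (δ * sg * (i : ℤ)) = δ * sg :=
            isgn_mul_pos hδsg (by exact_mod_cast hi1)
          have h3 : isgn (δ * (m : ℤ)) = δ := isgn_mul_pos hδ (by omega)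
          rw [h3, mul_assoc, h1, h2]
          rcases hδ with h|h <;> rw [h] <;> ring
      -- the negative self-edge at the new value m
      have selfm : HEOn G σ' Φ m m (-1) (insert v s) := by
        refine ⟨v, Set.mem_insert v s, u0, Set.mem_insert_of_mem v hu0, hadj0,
          habs_v, habs_u0, ?_⟩
        unfold redSign
        rw [hΦv, hΦu0, isgn_mul_pos hδ (by omega), isgn_natCast, hσvu0]
        rcases hδ with h|h <;> rw [h] <;> ring
      -- bounds on colour values for k+1
      have hbound : ∀ l : ℕ, (l : ℤ) ∈ colourSet (k + 1) → 1 ≤ l ∧ l ≤ m := by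
        intro l hl
        have h1 := mem_colourSet_even_ne hek1 hl
        have h2 := mem_colourSet_natAbs_le hl
        rw [Int.natAbs_natCast, hk2] at h2
        exact ⟨by omega, h2⟩
      refine ⟨k + 1, Nat.le_succ k, σ', hsig, hswe, Φ, ⟨?_, ?_⟩, ?_, ?_⟩
      · -- colours lie in the new colour set
        intro u hu
        rcases hu with rfl | hu
        · exact mem_of_abs _ habs_v
        · by_cases h0 : φ u = 0
          · exact mem_of_abs _ (habsZ u hu h0)
          · rw [hΦs' u hu h0]
            refine mem_colourSet_of h0 ?_
            rw [hk2]; exact le_trans (hsmall u hu) (by omega)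
      · -- properness
        intro u hu w hw hadj
        rcases hu with rfl | hu <;> rcases hw with rfl | hw
        · exact absurd hadj (G.loopless.irrefl _)
        · -- u = v, w ∈ s
          by_cases h0 : φ w = 0
          · by_cases hwu0 : w = u0
            · subst hwu0
              rw [hΦv, hΦu0, hσvu0]
              rcases hδ with h|h <;> rw [h] <;> omega
            · rw [hΦv, hΦz w hw h0 hwu0, hsym _ w]
              rcases hval w _ with h|h <;> rcases hδ with h2|h2 <;>
                rw [h, h2] <;> omega
          · apply neq_of_natAbs (hval _ w)
            rw [habs_v, hΦs' w hw h0]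
            have := hsmall w hw; omega
        · -- u ∈ s, w = v
          by_cases h0 : φ u = 0
          · by_cases huu0 : u = u0
            · rw [huu0, hΦv, hΦu0, hsym u0 _, hσvu0]
              rcases hδ with h|h <;> rw [h] <;> omega
            · rw [hΦv, hΦz u hu h0 huu0]
              rcases hval u _ with h|h <;> rcases hδ with h2|h2 <;>
                rw [h, h2] <;> omega
          · apply neq_of_natAbs (hval u _)
            rw [habs_v, hΦs' u hu h0]
            have := hsmall u hu; omega
        · -- both in s
          by_cases h0u : φ u = 0 <;> by_cases h0w : φ w = 0
          · exact absurd hadj (hind u hu w hw h0u h0w)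
          · apply neq_of_natAbs (hval u w)
            rw [habsZ u hu h0u, hΦs' w hw h0w]
            have := hsmall w hw; omega
          · apply neq_of_natAbs (hval u w)
            rw [habsZ w hw h0w, hΦs' u hu h0u]
            have := hsmall u hu; omega
          · rw [hΦs' u hu h0u, hΦs' w hw h0w]; exact p2 u hu w hw hadj
      · -- all pairs of values realised with both signs
        intro i j hi hj hij
        obtain ⟨hi1, him⟩ := hbound i hi
        obtain ⟨hj1, hjm⟩ := hbound j hj
        by_cases hieq : i = m
        · subst hieq
          have hjk : j ≤ k / 2 := by omega
          exact ⟨conflict_big j hj1 hjk 1 (Or.inl rfl),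
            conflict_big j hj1 hjk (-1) (Or.inr rfl)⟩
        · by_cases hjeq : j = m
          · subst hjeq
            have hik : i ≤ k / 2 := by omega
            exact ⟨HEOn_symm hsym (conflict_big i hi1 hik 1 (Or.inl rfl)),
              HEOn_symm hsym (conflict_big i hi1 hik (-1) (Or.inr rfl))⟩
          · have hik : i ≤ k / 2 := by omega
            have hjk : j ≤ k / 2 := by omega
            obtain ⟨e1, e2⟩ := c2 i j (memk i hik) (memk j hjk) hij
            exact ⟨HEOld i j 1 hi1 hj1 e1, HEOld i j (-1) hi1 hj1 e2⟩
      · -- negative self-edges at every value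
        intro i h1 h2
        obtain ⟨hi1, him⟩ := hbound i h2
        by_cases hieq : i = m
        · subst hieq; exact selfm
        · have hik : i ≤ k / 2 := by omega
          exact HEOld i i (-1) h1 h1 (c3 i h1 (memk i hik))

end Extend
section Finish
variable {V : Type*}

lemma extend_univ [Fintype V] {G : SimpleGraph V} {σ : V → V → ℤ} {k : ℕ} {s : Set V}
    (h : AdmOn G σ k s) : ∃ k', k ≤ k' ∧ AdmOn G σ k' Set.univ := by
  classical
  suffices H : ∀ t : Finset V, ∀ s : Set V, sᶜ ⊆ ↑t → ∀ k, AdmOn G σ k s →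
      ∃ k', k ≤ k' ∧ AdmOn G σ k' Set.univ from
    H Finset.univ s (by simp) k h
  intro t
  induction t using Finset.induction with
  | empty =>
    intro s hs k h
    have hsu : s = Set.univ :=
      Set.compl_empty_iff.1 (Set.subset_empty_iff.1 (by simpa using hs))
    exact ⟨k, le_refl k, hsu ▸ h⟩
  | @insert a t ha ih =>
    intro s hs k h
    by_cases hmem : a ∈ s
    · refine ih s (fun x hx => ?_) k h
      have h1 := hs hx
      rw [Finset.coe_insert, Set.mem_insert_iff] at h1
      exact h1.resolve_left (fun he => hx (by rw [he]; exact hmem))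
    · obtain ⟨k1, hk1, h1⟩ := extend_step hmem h
      have hsub : (insert a s)ᶜ ⊆ (↑t : Set V) := by
        intro x hx
        have hxa : x ≠ a := fun he => hx (by rw [he]; exact Set.mem_insert a s)
        have hxs : x ∈ sᶜ := fun hxs' => hx (Set.mem_insert_of_mem a hxs')
        have h4 := hs hxs
        rw [Finset.coe_insert, Set.mem_insert_iff] at h4
        exact h4.resolve_left hxa
      obtain ⟨k2, hk2, h2⟩ := ih (insert a s) hsub k1 h1
      exact ⟨k2, le_trans hk1 hk2, h2⟩

lemma admits_bound [Fintype V] {G : SimpleGraph V} {σ : V → V → ℤ} {k : ℕ}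
    (h : AdmitsComplete G σ k) : k ≤ 2 * Fintype.card V + 1 := by
  classical
  obtain ⟨σ', _, _, φ, ⟨_, _, c3⟩⟩ := h
  have hmap : ∀ i ∈ Finset.Icc 1 (k / 2), ∃ u : V, (φ u).natAbs = i := by
    intro i hi
    rw [Finset.mem_Icc] at hi
    have hmem : (i : ℤ) ∈ colourSet k :=
      mem_colourSet_of (by exact_mod_cast Nat.cast_ne_zero.2 (by omega)) (by simpa using hi.2)
    obtain ⟨u, w, _, h1, _⟩ := c3 i hi.1 hmem
    exact ⟨u, h1⟩
  rcases Nat.eq_zero_or_pos (k / 2) with h0 | h0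
  · omega
  have hV : Nonempty V := by
    obtain ⟨u, _⟩ := hmap 1 (by rw [Finset.mem_Icc]; omega)
    exact ⟨u⟩
  have hmap' : ∀ i : ℕ, ∃ u : V, i ∈ Finset.Icc 1 (k / 2) → (φ u).natAbs = i := by
    intro i
    by_cases hi : i ∈ Finset.Icc 1 (k / 2)
    · obtain ⟨u, hu⟩ := hmap i hi
      exact ⟨u, fun _ => hu⟩
    · exact ⟨Classical.arbitrary V, fun h => absurd h hi⟩
  choose f hf using hmap'
  have hcard : (Finset.Icc 1 (k / 2)).card ≤ Fintype.card V := by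
    have := Finset.card_le_card_of_injOn f (fun x _ => Finset.mem_univ (f x))
      (fun a ha b hb hab => by
        rw [← hf a (Finset.mem_coe.1 ha), ← hf b (Finset.mem_coe.1 hb), hab])
    simpa using this
  rw [Nat.card_Icc] at hcard
  omega

end Finish

/-- If `(H,π)` is an induced signed subgraph of `(G,σ)`, then
`ψ(H,π) ≤ ψ(G,σ)`. -/
theorem statement9 {V : Type*} [Fintype V] (G : SimpleGraph V) (σ : V → V → ℤ)
    (hσ : IsSignature σ) (s : Set V) :
    psi (G.induce s) (fun a b => σ a.1 b.1) ≤ psi G σ := by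
  classical
  unfold psi
  rcases Set.eq_empty_or_nonempty
      {k | AdmitsComplete (G.induce s) (fun a b => σ a.1 b.1) k} with he | hne
  · rw [he, csSup_empty]; exact bot_le
  · apply csSup_le hne
    intro k hk
    have h1 := admOn_of_induce hσ hk
    obtain ⟨k', hkk', h2⟩ := extend_univ h1
    have h3 : AdmitsComplete G σ k' := by
      obtain ⟨σ'', a, b, φ, hc⟩ := h2
      exact ⟨σ'', a, b, φ, COn_univ_iff.1 hc⟩
    have hbdd : BddAbove {k | AdmitsComplete G σ k} :=
      ⟨2 * Fintype.card V + 1, fun x hx => admits_bound hx⟩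
    exact le_trans hkk' (le_csSup hbdd h3)
end
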